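/- For every cycle C_n on n ≥ 3 vertices, the Roman domination number of C_n equals ⌈2n/3⌉. -/

import Mathlib

def IsRDF {V : Type*} (G : SimpleGraph V) (f : V → ℕ) : Prop :=
  (∀ v, f v ≤ 2) ∧ ∀ v, f v = 0 → ∃ u, G.Adj v u ∧ f u = 2

noncomputable def gammaR {V : Type*} [Fintype V] (G : SimpleGraph V) : ℕ :=
  sInf {w | ∃ f, IsRDF G f ∧ ∑ v, f v = w}

def IsMinRDF {V : Type*} [Fintype V] (G : SimpleGraph V) (f : V → ℕ) : Prop :=
  IsRDF G f ∧ ∑ v, f v = gammaR G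

noncomputable instance myInstSetFintype {V : Type*} [Fintype V] (s : Set V) : Fintype s :=
  s.toFinite.fintype

lemma sum_indicator_aux (m : ℕ) :
    ∑ i ∈ Finset.range m, (if i % 3 = 1 then 2 else 0) = 2 * ((m + 1) / 3) := by
  induction m with
  | zero => simp
  | succ m ih =>
    rw [Finset.sum_range_succ, ih]
    split_ifs with h <;> omega

lemma val_one_aux {n : ℕ} [NeZero n] (hn : 3 ≤ n) : ((1 : Fin n) : ℕ) = 1 := by
  rw [Fin.val_one']
  exact Nat.mod_eq_of_lt (by omega)

lemma upper_aux (n : ℕ) (hn : 3 ≤ n) :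
    ∃ f, IsRDF (SimpleGraph.cycleGraph n) f ∧ ∑ v, f v = (2 * n + 2) / 3 := by
  haveI : NeZero n := ⟨by omega⟩
  refine ⟨fun v => (if (v : ℕ) % 3 = 1 then 2 else 0) +
      (if n % 3 = 1 ∧ (v : ℕ) = n - 1 then 1 else 0), ⟨⟨?_, ?_⟩, ?_⟩⟩
  · intro v
    dsimp only
    split_ifs <;> omega
  · intro v hv
    have h1 : (v : ℕ) % 3 ≠ 1 := by by_contra h; simp [h] at hv
    have h2 : ¬ (n % 3 = 1 ∧ (v : ℕ) = n - 1) := by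
      by_contra h; simp [h.1, h.2] at hv
    have hvlt : (v : ℕ) < n := v.isLt
    have hmod : (v : ℕ) % 3 = 0 ∨ (v : ℕ) % 3 = 2 := by omega
    rcases hmod with h0 | h0
    · -- v % 3 = 0 : use v + 1
      have hne : (v : ℕ) ≠ n - 1 := by
        intro he
        exact h2 ⟨by omega, he⟩
      have hlt : (v : ℕ) + 1 < n := by omega
      refine ⟨v + 1, ?_, ?_⟩
      · rw [SimpleGraph.cycleGraph_adj']
        right
        rw [add_sub_cancel_left, val_one_aux hn]
      · have hval : ((v + 1 : Fin n) : ℕ) = (v : ℕ) + 1 := by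
          rw [Fin.val_add, val_one_aux hn]
          exact Nat.mod_eq_of_lt hlt
        have : ((v + 1 : Fin n) : ℕ) % 3 = 1 := by omega
        simp only [this, if_true]
        have : ¬ (n % 3 = 1 ∧ ((v + 1 : Fin n) : ℕ) = n - 1) := by
          rintro ⟨ha, hb⟩; omega
        simp [this]
    · -- v % 3 = 2 : use v - 1
      have h2le : 2 ≤ (v : ℕ) := by omega
      have hle : (1 : Fin n) ≤ v := by
        rw [Fin.le_def, val_one_aux hn]; omega
      have hval : ((v - 1 : Fin n) : ℕ) = (v : ℕ) - 1 := by
        rw [Fin.coe_sub_iff_le.mpr hle, val_one_aux hn]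
      refine ⟨v - 1, ?_, ?_⟩
      · rw [SimpleGraph.cycleGraph_adj']
        left
        rw [sub_sub_cancel, val_one_aux hn]
      · have h3 : ((v - 1 : Fin n) : ℕ) % 3 = 1 := by omega
        simp only [h3, if_true]
        have : ¬ (n % 3 = 1 ∧ ((v - 1 : Fin n) : ℕ) = n - 1) := by
          rintro ⟨ha, hb⟩; omega
        simp [this]
  · rw [Finset.sum_add_distrib]
    have e1 : ∑ v : Fin n, (if (v : ℕ) % 3 = 1 then 2 else 0) = 2 * ((n + 1) / 3) := by
      rw [Fin.sum_univ_eq_sum_range (fun i => if i % 3 = 1 then 2 else 0) n]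
      exact sum_indicator_aux n
    have e2 : ∑ v : Fin n, (if n % 3 = 1 ∧ (v : ℕ) = n - 1 then 1 else 0)
        = if n % 3 = 1 then 1 else 0 := by
      by_cases h : n % 3 = 1
      · simp only [h, true_and, if_true]
        have hmem : (⟨n - 1, by omega⟩ : Fin n) ∈ Finset.univ := Finset.mem_univ _
        calc ∑ v : Fin n, (if (v : ℕ) = n - 1 then 1 else 0)
            = ∑ v : Fin n, (if v = (⟨n - 1, by omega⟩ : Fin n) then 1 else 0) := by
              apply Finset.sum_congr rfl
              intro v _
              congr 1
              simp [Fin.ext_iff]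
          _ = 1 := by rw [Finset.sum_ite_eq' Finset.univ]; simp
      · simp [h]
    rw [e1, e2]
    split_ifs with h <;> omega

lemma lower_aux (n : ℕ) (hn : 3 ≤ n) (f : Fin n → ℕ)
    (hf : IsRDF (SimpleGraph.cycleGraph n) f) : 2 * n ≤ 3 * ∑ v, f v := by
  classical
  haveI : NeZero n := ⟨by omega⟩
  obtain ⟨hle, hdom⟩ := hf
  set V0 : Finset (Fin n) := Finset.univ.filter (fun v => f v = 0) with hV0
  set V1 : Finset (Fin n) := Finset.univ.filter (fun v => f v = 1) with hV1
  set V2 : Finset (Fin n) := Finset.univ.filter (fun v => f v = 2) with hV2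
  have hcard : V0.card + V1.card + V2.card = n := by
    rw [hV0, hV1, hV2, Finset.card_filter, Finset.card_filter, Finset.card_filter,
      ← Finset.sum_add_distrib, ← Finset.sum_add_distrib]
    have : ∀ v : Fin n, ((if f v = 0 then 1 else 0) + (if f v = 1 then 1 else 0))
        + (if f v = 2 then 1 else 0) = 1 := by
      intro v
      have := hle v
      split_ifs <;> omega
    rw [Finset.sum_congr rfl (fun v _ => this v)]
    simp
  have hweight : ∑ v, f v = V1.card + 2 * V2.card := by
    rw [hV1, hV2, Finset.card_filter, Finset.card_filter, Finset.mul_sum,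
      ← Finset.sum_add_distrib]
    apply Finset.sum_congr rfl
    intro v _
    have := hle v
    split_ifs <;> omega
  -- |V0| ≤ 2 * |V2|
  set g : Fin n → Fin n := fun v =>
    if h : ∃ u, (SimpleGraph.cycleGraph n).Adj v u ∧ f u = 2 then h.choose else v with hg
  have hmaps : ∀ v ∈ V0, g v ∈ V2 := by
    intro v hv
    rw [hV0, Finset.mem_filter] at hv
    have hex := hdom v hv.2
    rw [hg]
    simp only [hex, dif_pos]
    rw [hV2, Finset.mem_filter]
    exact ⟨Finset.mem_univ _, hex.choose_spec.2⟩
  have hadj : ∀ v ∈ V0, (SimpleGraph.cycleGraph n).Adj v (g v) := by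
    intro v hv
    rw [hV0, Finset.mem_filter] at hv
    have hex := hdom v hv.2
    rw [hg]
    simp only [hex, dif_pos]
    exact hex.choose_spec.1
  have hfiber : ∀ b ∈ V2, (V0.filter (fun v => g v = b)).card ≤ 2 := by
    intro b _
    have hsub : V0.filter (fun v => g v = b) ⊆ {b + 1, b - 1} := by
      intro v hv
      rw [Finset.mem_filter] at hv
      have hadjvb : (SimpleGraph.cycleGraph n).Adj v b := hv.2 ▸ hadj v hv.1
      rw [SimpleGraph.cycleGraph_adj'] at hadjvb
      have hone : ((1 : Fin n) : ℕ) = 1 := val_one_aux hn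
      rcases hadjvb with h | h
      · have h1 : v - b = 1 := by rw [Fin.ext_iff, hone]; exact h
        have h2 : v = b + 1 := by rw [← h1]; abel
        simp [h2]
      · have h1 : b - v = 1 := by rw [Fin.ext_iff, hone]; exact h
        have h2 : v = b - 1 := by rw [← h1]; abel
        simp [h2]
    calc (V0.filter (fun v => g v = b)).card ≤ ({b + 1, b - 1} : Finset (Fin n)).card :=
          Finset.card_le_card hsub
      _ ≤ 2 := Finset.card_insert_le _ _ |>.trans (by simp)
  have hV0le : V0.card ≤ 2 * V2.card :=
    Finset.card_le_mul_card_image_of_maps_to hmaps 2 hfiber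
  omega

lemma ceil_aux (n m : ℕ) (hle : m ≤ (2 * n + 2) / 3) (hge : 2 * n ≤ 3 * m) :
    (m : ℤ) = ⌈(2 * n / 3 : ℚ)⌉ := by
  have h2 : 3 * m < 2 * n + 3 := by omega
  symm
  rw [Int.ceil_eq_iff]
  constructor
  · rw [lt_div_iff₀ (by norm_num : (0 : ℚ) < 3)]
    have h3 : (3 : ℚ) * m < 2 * n + 3 := by exact_mod_cast h2
    push_cast
    linarith
  · rw [div_le_iff₀ (by norm_num : (0 : ℚ) < 3)]
    have h3 : (2 : ℚ) * n ≤ 3 * m := by exact_mod_cast hge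
    push_cast
    linarith

theorem gammaR_cycleGraph (n : ℕ) (hn : 3 ≤ n) :
    (gammaR (SimpleGraph.cycleGraph n) : ℤ) = ⌈(2 * n / 3 : ℚ)⌉ := by
  obtain ⟨f, hf, hsum⟩ := upper_aux n hn
  have hne : {w | ∃ f, IsRDF (SimpleGraph.cycleGraph n) f ∧ ∑ v, f v = w}.Nonempty :=
    ⟨(2 * n + 2) / 3, f, hf, hsum⟩
  have hle : gammaR (SimpleGraph.cycleGraph n) ≤ (2 * n + 2) / 3 :=
    Nat.sInf_le ⟨f, hf, hsum⟩
  obtain ⟨f', hf', hsum'⟩ := Nat.sInf_mem hne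
  have hge : 2 * n ≤ 3 * gammaR (SimpleGraph.cycleGraph n) := by
    have h := lower_aux n hn f' hf'
    rw [hsum'] at h
    exact h
  exact ceil_aux n _ hle hge
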